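/- Let f(θ, w) = φ(θ) + (1/2)‖Aθ + Bw − y‖² where φ is convex and L_φ-smooth, and set F(θ) = ∇φ(θ) + Aᵀ(Aθ + B w*(θ) − y) with w*(θ) = B†(y − Aθ). Then F is (1/(2 max(L_φ, L̂)))-cocoercive, where L̂ = ‖Aᵀ(I − B B†)A‖ is the operator norm. -/

import Mathlib

open Matrix

open scoped RealInnerProductSpace

open scoped Topology
open Filter

section Aux

variable {E : Type*} [NormedAddCommGroup E] [InnerProductSpace ℝ E] [CompleteSpace E]

private theorem my_line_deriv (φ : E → ℝ) (g : E → E) (hg : ∀ z, HasGradientAt φ (g z) z)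
    (x v : E) (t : ℝ) :
    HasDerivAt (fun t : ℝ => φ (x + t • v)) ⟪g (x + t • v), v⟫ t := by
  have h1 : HasDerivAt (fun t : ℝ => x + t • v) v t := by
    simpa using ((hasDerivAt_id t).smul_const v).const_add x
  have h2 := (hasGradientAt_iff_hasFDerivAt.1 (hg (x + t • v))).comp_hasDerivAt t h1
  simp at h2
  exact h2

/-- The descent lemma for a function with `L`-Lipschitz gradient. -/
private theorem my_descent (φ : E → ℝ) (g : E → E) (L : ℝ) (hL : 0 ≤ L)
    (hg : ∀ z, HasGradientAt φ (g z) z)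
    (hlip : ∀ a b, ‖g a - g b‖ ≤ L * ‖a - b‖) (x y : E) :
    φ y ≤ φ x + ⟪g x, y - x⟫ + L / 2 * ‖y - x‖ ^ 2 := by
  set v := y - x with hv
  have cg : Continuous g := by
    have : LipschitzWith L.toNNReal g := by
      intro a b
      rw [edist_nndist, edist_nndist, ← ENNReal.coe_mul, ENNReal.coe_le_coe,
        ← NNReal.coe_le_coe]
      push_cast
      calc (dist (g a) (g b)) = ‖g a - g b‖ := by rw [dist_eq_norm]
        _ ≤ L * ‖a - b‖ := hlip a b
        _ ≤ L.toNNReal * dist a b := by rw [dist_eq_norm]; gcongr; exact Real.le_coe_toNNReal L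
    exact this.continuous
  have cint : Continuous fun t : ℝ => ⟪g (x + t • v), v⟫ :=
    (cg.comp (by continuity)).inner continuous_const
  have key : φ (x + (1:ℝ) • v) - φ (x + (0:ℝ) • v) = ∫ t in (0:ℝ)..1, ⟪g (x + t • v), v⟫ :=
    (intervalIntegral.integral_eq_sub_of_hasDerivAt
      (fun t _ => my_line_deriv φ g hg x v t) (cint.intervalIntegrable 0 1)).symm
  have hbound : ∀ t ∈ Set.Icc (0:ℝ) 1, ⟪g (x + t • v), v⟫ ≤ ⟪g x, v⟫ + L * t * ‖v‖ ^ 2 := by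
    intro t ht
    have h1 : ⟪g (x + t • v) - g x, v⟫ ≤ ‖g (x + t • v) - g x‖ * ‖v‖ := real_inner_le_norm _ _
    have h2 : ‖g (x + t • v) - g x‖ ≤ L * (t * ‖v‖) := by
      calc ‖g (x + t • v) - g x‖ ≤ L * ‖x + t • v - x‖ := hlip _ _
        _ = L * (t * ‖v‖) := by
            rw [add_sub_cancel_left, norm_smul, Real.norm_eq_abs, abs_of_nonneg ht.1]
    have h3 : ⟪g (x + t • v) - g x, v⟫ ≤ L * t * ‖v‖ ^ 2 := by
      calc ⟪g (x + t • v) - g x, v⟫ ≤ ‖g (x + t • v) - g x‖ * ‖v‖ := h1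
        _ ≤ L * (t * ‖v‖) * ‖v‖ := by gcongr
        _ = L * t * ‖v‖ ^ 2 := by ring
    rw [inner_sub_left] at h3
    linarith
  have hint : (∫ t in (0:ℝ)..1, ⟪g (x + t • v), v⟫)
      ≤ ∫ t in (0:ℝ)..1, (⟪g x, v⟫ + L * t * ‖v‖ ^ 2) := by
    apply intervalIntegral.integral_mono_on (by norm_num)
      (cint.intervalIntegrable 0 1)
      ((by continuity : Continuous fun t : ℝ => ⟪g x, v⟫ + L * t * ‖v‖ ^ 2).intervalIntegrable 0 1)
    exact hbound
  have hval : (∫ t in (0:ℝ)..1, (⟪g x, v⟫ + L * t * ‖v‖ ^ 2)) = ⟪g x, v⟫ + L / 2 * ‖v‖ ^ 2 := by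
    rw [intervalIntegral.integral_add (f := fun _ => ⟪g x, v⟫) (g := fun t => L * t * ‖v‖ ^ 2)
      (intervalIntegrable_const)
      (((continuous_const.mul continuous_id').mul continuous_const).intervalIntegrable 0 1)]
    have : (∫ t in (0:ℝ)..1, L * t * ‖v‖ ^ 2) = L / 2 * ‖v‖ ^ 2 := by
      have : (fun t : ℝ => L * t * ‖v‖ ^ 2) = fun t : ℝ => (L * ‖v‖ ^ 2) * t := by
        funext t; ring
      rw [this, intervalIntegral.integral_const_mul, integral_id]
      ring
    rw [this]
    simp
  have : φ y - φ x ≤ ⟪g x, v⟫ + L / 2 * ‖v‖ ^ 2 := by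
    have e1 : x + (1:ℝ) • v = y := by simp [hv]
    have e0 : x + (0:ℝ) • v = x := by simp
    rw [e1, e0] at key
    rw [key]
    exact hint.trans (le_of_eq hval)
  linarith

/-- A critical point of a convex function is a global minimum. -/
private theorem my_min (h : E → ℝ) (hconv : ConvexOn ℝ Set.univ h) (x₂ : E)
    (hcrit : HasGradientAt h (0 : E) x₂) (z : E) : h x₂ ≤ h z := by
  set v := z - x₂ with hv
  have h1 : HasDerivAt (fun t : ℝ => x₂ + t • v) v 0 := by
    simpa using ((hasDerivAt_id (0:ℝ)).smul_const v).const_add x₂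
  have hd : HasDerivAt (fun t : ℝ => h (x₂ + t • v)) 0 0 := by
    have e : x₂ + (0:ℝ) • v = x₂ := by simp
    have hF := hasGradientAt_iff_hasFDerivAt.1 hcrit
    rw [← e] at hF
    have h2 := hF.comp_hasDerivAt 0 h1
    simp at h2
    exact h2
  have hs := hd.hasDerivWithinAt (s := Set.Ioi (0:ℝ))
  have hslope := (hasDerivWithinAt_iff_tendsto_slope.1 hs)
  have hbound : ∀ᶠ t in 𝓝[>] (0:ℝ), slope (fun t : ℝ => h (x₂ + t • v)) 0 t ≤ h z - h x₂ := by
    filter_upwards [Ioc_mem_nhdsGT_of_mem (by norm_num : (0:ℝ) ∈ Set.Ico (0:ℝ) 1)] with t ht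
    have ht0 : 0 < t := ht.1
    have hc := hconv.2 (Set.mem_univ x₂) (Set.mem_univ z)
      (by linarith [ht.2] : (0:ℝ) ≤ 1 - t) (le_of_lt ht0) (by ring)
    have hpt : (1 - t) • x₂ + t • z = x₂ + t • v := by
      simp [hv, smul_sub, sub_smul]; abel
    rw [hpt] at hc
    rw [slope_def_field]
    simp only [zero_smul, add_zero, sub_zero, smul_zero]
    rw [div_le_iff₀ ht0]
    simp only [smul_eq_mul] at hc
    nlinarith [hc]
  have hslope' : Filter.Tendsto (slope (fun t : ℝ => h (x₂ + t • v)) 0) (𝓝[>] (0:ℝ)) (𝓝 0) := by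
    have hsub : Set.Ioi (0:ℝ) \ {0} = Set.Ioi 0 := by simp
    rw [← hsub]
    exact hslope.mono_left (nhdsWithin_mono _ (by simp))
  have h0 : (0:ℝ) ≤ h z - h x₂ := le_of_tendsto hslope' hbound
  linarith

private theorem my_half (φ : E → ℝ) (g : E → E) (L : ℝ) (hL : 0 < L)
    (hconv : ConvexOn ℝ Set.univ φ)
    (hg : ∀ z, HasGradientAt φ (g z) z)
    (hlip : ∀ a b, ‖g a - g b‖ ≤ L * ‖a - b‖) (x₁ x₂ : E) :
    φ x₁ - φ x₂ - ⟪g x₂, x₁ - x₂⟫ ≥ 1 / (2 * L) * ‖g x₁ - g x₂‖ ^ 2 := by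
  set h : E → ℝ := fun z => φ z - ⟪g x₂, z⟫ with hh
  set gh : E → E := fun z => g z - g x₂ with hgh
  have hghgrad : ∀ z, HasGradientAt h (gh z) z := by
    intro z
    have h1 : HasGradientAt (fun z : E => ⟪g x₂, z⟫) (g x₂) z := by
      apply hasGradientAt_iff_hasFDerivAt.2
      exact (InnerProductSpace.toDual ℝ E (g x₂)).hasFDerivAt
    have h2 := (hasGradientAt_iff_hasFDerivAt.1 (hg z)).sub (hasGradientAt_iff_hasFDerivAt.1 h1)
    apply hasGradientAt_iff_hasFDerivAt.2
    rw [hgh]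
    simp only [map_sub]
    exact h2
  have hhconv : ConvexOn ℝ Set.univ h := by
    refine ⟨convex_univ, fun a _ b _ s t hs ht hst => ?_⟩
    have := hconv.2 (Set.mem_univ a) (Set.mem_univ b) hs ht hst
    simp only [smul_eq_mul] at this
    simp only [hh, smul_eq_mul, inner_add_right, real_inner_smul_right]
    linarith
  have hhlip : ∀ a b, ‖gh a - gh b‖ ≤ L * ‖a - b‖ := by
    intro a b; simpa [hgh, sub_sub_sub_cancel_right] using hlip a b
  have hmin : ∀ z, h x₂ ≤ h z := by
    intro z
    apply my_min h hhconv x₂ _ z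
    have := hghgrad x₂
    simpa [hgh] using this
  set G := g x₁ - g x₂ with hG
  have hdesc := my_descent h gh L hL.le hghgrad hhlip x₁ (x₁ - (1 / L) • G)
  have e1 : x₁ - (1 / L) • G - x₁ = -((1/L) • G) := by abel
  rw [e1] at hdesc
  have e2 : ⟪gh x₁, -((1/L) • G)⟫ = -(1/L) * ‖G‖ ^ 2 := by
    rw [inner_neg_right, real_inner_smul_right]
    have : gh x₁ = G := by simp [hgh, hG]
    rw [this, real_inner_self_eq_norm_sq]
    ring
  have e3 : ‖-((1/L) • G)‖ ^ 2 = (1/L)^2 * ‖G‖ ^ 2 := by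
    rw [norm_neg, norm_smul, Real.norm_eq_abs, abs_of_pos (by positivity : (0:ℝ) < 1/L)]
    ring
  rw [e2, e3] at hdesc
  have hmin' := hmin (x₁ - (1 / L) • G)
  have key : h x₂ ≤ h x₁ - 1 / (2 * L) * ‖G‖ ^ 2 := by
    have hL' : L ≠ 0 := hL.ne'
    calc h x₂ ≤ h (x₁ - (1/L) • G) := hmin'
      _ ≤ h x₁ + -(1/L) * ‖G‖^2 + L / 2 * ((1/L)^2 * ‖G‖^2) := hdesc
      _ = h x₁ - 1 / (2 * L) * ‖G‖ ^ 2 := by field_simp; ring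
  simp only [hh] at key
  have e : ⟪g x₂, x₁ - x₂⟫ = ⟪g x₂, x₁⟫ - ⟪g x₂, x₂⟫ := inner_sub_right _ _ _
  linarith

/-- Baillon–Haddad: the gradient of a convex function with `L`-Lipschitz gradient is
`1/L`-cocoercive. -/
private theorem my_cocoercive (φ : E → ℝ) (g : E → E) (L : ℝ) (hL : 0 < L)
    (hconv : ConvexOn ℝ Set.univ φ)
    (hg : ∀ z, HasGradientAt φ (g z) z)
    (hlip : ∀ a b, ‖g a - g b‖ ≤ L * ‖a - b‖) (x₁ x₂ : E) :
    ⟪g x₁ - g x₂, x₁ - x₂⟫ ≥ 1 / L * ‖g x₁ - g x₂‖ ^ 2 := by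
  have h1 := my_half φ g L hL hconv hg hlip x₁ x₂
  have h2 := my_half φ g L hL hconv hg hlip x₂ x₁
  have e : ‖g x₂ - g x₁‖ = ‖g x₁ - g x₂‖ := norm_sub_rev _ _
  rw [e] at h2
  have esum : ⟪g x₁ - g x₂, x₁ - x₂⟫ =
      (φ x₁ - φ x₂ - ⟪g x₂, x₁ - x₂⟫) + (φ x₂ - φ x₁ - ⟪g x₁, x₂ - x₁⟫) := by
    rw [inner_sub_left]
    have : ⟪g x₁, x₂ - x₁⟫ = -⟪g x₁, x₁ - x₂⟫ := by
      rw [← inner_neg_right]; congr 1; abel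
    rw [this]; ring
  rw [esum]
  have : 1 / L * ‖g x₁ - g x₂‖ ^ 2
      = 1 / (2*L) * ‖g x₁ - g x₂‖^2 + 1 / (2*L) * ‖g x₁ - g x₂‖^2 := by
    field_simp; ring
  rw [this]
  exact add_le_add h1 h2

end Aux

section Op

variable {E : Type*} [NormedAddCommGroup E] [InnerProductSpace ℝ E]

/-- For a symmetric positive semidefinite operator, `‖T x‖² ≤ ‖T‖ ⟪T x, x⟫`. -/
private theorem my_op (T : E →L[ℝ] E) (hsym : ∀ x y, ⟪T x, y⟫ = ⟪x, T y⟫)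
    (hpos : ∀ x, 0 ≤ ⟪T x, x⟫) (x : E) : ‖T x‖ ^ 2 ≤ ‖T‖ * ⟪T x, x⟫ := by
  have cs : ∀ u w : E, ⟪T u, w⟫ ^ 2 ≤ ⟪T u, u⟫ * ⟪T w, w⟫ := by
    intro u w
    have hquad : ∀ t : ℝ, 0 ≤ ⟪T w, w⟫ * (t * t) + (2 * ⟪T u, w⟫) * t + ⟪T u, u⟫ := by
      intro t
      have := hpos (u + t • w)
      have expand : ⟪T (u + t • w), u + t • w⟫ =
          ⟪T w, w⟫ * (t * t) + (2 * ⟪T u, w⟫) * t + ⟪T u, u⟫ := by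
        rw [map_add, _root_.map_smul]
        rw [inner_add_left, inner_add_right, inner_add_right]
        rw [inner_smul_left, inner_smul_right, inner_smul_left, inner_smul_right]
        have h1 : ⟪T w, u⟫ = ⟪w, T u⟫ := hsym w u
        have h2 : ⟪w, T u⟫ = ⟪T u, w⟫ := real_inner_comm _ _
        simp only [RCLike.star_def, conj_trivial]
        rw [h1, h2]
        ring
      linarith [expand ▸ this]
    have hd := discrim_le_zero hquad
    rw [discrim] at hd
    nlinarith [hd]
  have h1 := cs x (T x)
  have h2 : ⟪T (T x), T x⟫ ≤ ‖T‖ * ‖T x‖ ^ 2 := by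
    calc ⟪T (T x), T x⟫ ≤ ‖T (T x)‖ * ‖T x‖ := real_inner_le_norm _ _
      _ ≤ (‖T‖ * ‖T x‖) * ‖T x‖ := by gcongr; exact T.le_opNorm _
      _ = ‖T‖ * ‖T x‖ ^ 2 := by ring
  have h3 : ⟪T x, T x⟫ = ‖T x‖ ^ 2 := real_inner_self_eq_norm_sq _
  rw [h3] at h1
  rcases eq_or_lt_of_le (norm_nonneg (T x)) with h0 | h0
  · rw [← h0]; nlinarith [mul_nonneg (norm_nonneg T) (hpos x)]
  · have h4 : (‖T x‖ ^ 2) ^ 2 ≤ ⟪T x, x⟫ * (‖T‖ * ‖T x‖ ^ 2) := by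
      calc (‖T x‖ ^ 2) ^ 2 ≤ ⟪T x, x⟫ * ⟪T (T x), T x⟫ := h1
        _ ≤ ⟪T x, x⟫ * (‖T‖ * ‖T x‖ ^ 2) := mul_le_mul_of_nonneg_left h2 (hpos x)
    have h5 : 0 < ‖T x‖ ^ 2 := by positivity
    nlinarith [h4, h5]

end Op

private theorem my_clm_apply {d : ℕ} (M : Matrix (Fin d) (Fin d) ℝ)
    (x : EuclideanSpace ℝ (Fin d)) :
    (Matrix.toEuclideanCLM (𝕜 := ℝ) M) x = (show EuclideanSpace ℝ (Fin d) from WithLp.toLp 2 (M *ᵥ x)) := rfl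

set_option maxHeartbeats 1000000 in
/-- For f(θ, w) = φ(θ) + (1/2)‖Aθ + Bw − y‖² with φ convex and L_φ-smooth, the operator
F(θ) = ∇φ(θ) + Aᵀ(Aθ + B w*(θ) − y), w*(θ) = B†(y − Aθ), is
(1/(2 max(L_φ, L̂)))-cocoercive, where L̂ = ‖Aᵀ(I − B B†)A‖. -/
theorem stmt6 {n d k : ℕ} (Lφ : ℝ) (hLφ : 0 < Lφ)
    (A : Matrix (Fin n) (Fin d) ℝ) (B : Matrix (Fin n) (Fin k) ℝ)
    (Bd : Matrix (Fin k) (Fin n) ℝ) (y : Fin n → ℝ)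
    (h1 : B * Bd * B = B) (h2 : Bd * B * Bd = Bd)
    (h3 : (B * Bd)ᵀ = B * Bd) (h4 : (Bd * B)ᵀ = Bd * B)
    (φ : EuclideanSpace ℝ (Fin d) → ℝ)
    (gφ : EuclideanSpace ℝ (Fin d) → EuclideanSpace ℝ (Fin d))
    (hconv : ConvexOn ℝ Set.univ φ)
    (hgφ : ∀ x, HasGradientAt φ (gφ x) x)
    (hlip : ∀ x₁ x₂, ‖gφ x₁ - gφ x₂‖ ≤ Lφ * ‖x₁ - x₂‖)
    (wstar : (Fin d → ℝ) → (Fin k → ℝ))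
    (hw : ∀ θ, wstar θ = Bd *ᵥ (y - A *ᵥ θ))
    (F : EuclideanSpace ℝ (Fin d) → EuclideanSpace ℝ (Fin d))
    (hF : ∀ θ, F θ = gφ θ + (show EuclideanSpace ℝ (Fin d) from WithLp.toLp 2 (Aᵀ *ᵥ (A *ᵥ θ + B *ᵥ wstar θ - y))))
    (Lhat : ℝ)
    (hLhat : Lhat = ‖(Matrix.toEuclideanCLM (𝕜 := ℝ) (Aᵀ * (1 - B * Bd) * A) :
      EuclideanSpace ℝ (Fin d) →L[ℝ] EuclideanSpace ℝ (Fin d))‖) :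
    ∀ θ₁ θ₂, ⟪F θ₁ - F θ₂, θ₁ - θ₂⟫ ≥
      (1 / (2 * max Lφ Lhat)) * ‖F θ₁ - F θ₂‖ ^ 2 := by
  intro θ₁ θ₂
  set P : Matrix (Fin n) (Fin n) ℝ := 1 - B * Bd with hP
  set M : Matrix (Fin d) (Fin d) ℝ := Aᵀ * P * A with hM
  set T : EuclideanSpace ℝ (Fin d) →L[ℝ] EuclideanSpace ℝ (Fin d) :=
    (Matrix.toEuclideanCLM (𝕜 := ℝ) M) with hT
  have hPt : Pᵀ = P := by rw [hP, transpose_sub, transpose_one, h3]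
  have hPP : P * P = P := by
    have hC : (B * Bd) * (B * Bd) = B * Bd := by rw [← Matrix.mul_assoc, h1]
    rw [hP]; noncomm_ring [hC]
  have hinner : ∀ u v : EuclideanSpace ℝ (Fin d),
      ⟪u, v⟫ = (u : Fin d → ℝ) ⬝ᵥ (v : Fin d → ℝ) := by
    intro u v; simp [PiLp.inner_apply, dotProduct, mul_comm]
  have key : ∀ x y : EuclideanSpace ℝ (Fin d),
      ⟪T x, y⟫ = (P *ᵥ (A *ᵥ (x : Fin d → ℝ))) ⬝ᵥ (P *ᵥ (A *ᵥ (y : Fin d → ℝ))) := by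
    intro x y
    have hTx : T x = (show EuclideanSpace ℝ (Fin d) from WithLp.toLp 2 (M *ᵥ (x : Fin d → ℝ))) :=
      my_clm_apply M x
    rw [hTx, hinner]
    show (M *ᵥ (x : Fin d → ℝ)) ⬝ᵥ (y : Fin d → ℝ) = _
    set a := A *ᵥ (x : Fin d → ℝ) with ha
    set b := A *ᵥ (y : Fin d → ℝ) with hb
    calc (M *ᵥ (x : Fin d → ℝ)) ⬝ᵥ (y : Fin d → ℝ)
        = (Aᵀ *ᵥ (P *ᵥ a)) ⬝ᵥ (y : Fin d → ℝ) := by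
          rw [hM, ← Matrix.mulVec_mulVec, ← Matrix.mulVec_mulVec]
      _ = (y : Fin d → ℝ) ⬝ᵥ (Aᵀ *ᵥ (P *ᵥ a)) := dotProduct_comm _ _
      _ = b ⬝ᵥ (P *ᵥ a) := by rw [Matrix.dotProduct_mulVec, Matrix.vecMul_transpose, ← hb]
      _ = b ⬝ᵥ (P *ᵥ (P *ᵥ a)) := by rw [Matrix.mulVec_mulVec a P P, hPP]
      _ = (b ᵥ* P) ⬝ᵥ (P *ᵥ a) := by rw [Matrix.dotProduct_mulVec]
      _ = (P *ᵥ b) ⬝ᵥ (P *ᵥ a) := by rw [← hPt, Matrix.vecMul_transpose, hPt]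
      _ = (P *ᵥ a) ⬝ᵥ (P *ᵥ b) := dotProduct_comm _ _
  have hsym : ∀ x y : EuclideanSpace ℝ (Fin d), ⟪T x, y⟫ = ⟪x, T y⟫ := by
    intro x y
    rw [key x y, real_inner_comm, key y x, dotProduct_comm]
  have hpos : ∀ x : EuclideanSpace ℝ (Fin d), 0 ≤ ⟪T x, x⟫ := by
    intro x
    rw [key x x]
    exact Finset.sum_nonneg fun i _ => mul_self_nonneg _
  -- the difference of F
  have hvec : ∀ u₁ u₂ : Fin d → ℝ,
      (Aᵀ *ᵥ (A *ᵥ u₁ + B *ᵥ (Bd *ᵥ (y - A *ᵥ u₁)) - y))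
        - (Aᵀ *ᵥ (A *ᵥ u₂ + B *ᵥ (Bd *ᵥ (y - A *ᵥ u₂)) - y)) = M *ᵥ (u₁ - u₂) := by
    intro u₁ u₂
    rw [← Matrix.mulVec_sub Aᵀ]
    rw [hM, ← Matrix.mulVec_mulVec, ← Matrix.mulVec_mulVec]
    congr 1
    rw [hP, Matrix.sub_mulVec, Matrix.one_mulVec,
      Matrix.mulVec_mulVec, Matrix.mulVec_mulVec]
    simp only [Matrix.mulVec_sub, Matrix.mulVec_add]
    abel
  have hdiff : F θ₁ - F θ₂ = (gφ θ₁ - gφ θ₂) + T (θ₁ - θ₂) := by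
    rw [hF θ₁, hF θ₂, hw, hw]
    rw [add_sub_add_comm]
    congr 1
    rw [my_clm_apply]
    show WithLp.toLp 2 _ - WithLp.toLp 2 _ = WithLp.toLp 2 _
    rw [← WithLp.toLp_sub]
    exact congrArg (WithLp.toLp 2) (hvec θ₁ θ₂)
  set Δ : EuclideanSpace ℝ (Fin d) := θ₁ - θ₂ with hΔ
  set G : EuclideanSpace ℝ (Fin d) := gφ θ₁ - gφ θ₂ with hG
  set m : ℝ := max Lφ Lhat with hm
  have hm0 : 0 < m := lt_of_lt_of_le hLφ (le_max_left _ _)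
  have hBH : ⟪G, Δ⟫ ≥ 1 / Lφ * ‖G‖ ^ 2 :=
    my_cocoercive φ gφ Lφ hLφ hconv hgφ hlip θ₁ θ₂
  have hBH' : ‖G‖ ^ 2 ≤ Lφ * ⟪G, Δ⟫ := by
    rw [ge_iff_le, div_mul_eq_mul_div, one_mul, div_le_iff₀ hLφ] at hBH
    linarith [hBH]
  have hGΔ : 0 ≤ ⟪G, Δ⟫ := by nlinarith [sq_nonneg ‖G‖]
  have hq0 : 0 ≤ ⟪T Δ, Δ⟫ := hpos Δ
  have hTn : ‖T Δ‖ ^ 2 ≤ Lhat * ⟪T Δ, Δ⟫ := by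
    rw [hLhat]
    exact my_op T hsym hpos Δ
  have hGm : ‖G‖ ^ 2 ≤ m * ⟪G, Δ⟫ :=
    hBH'.trans (mul_le_mul_of_nonneg_right (le_max_left _ _) hGΔ)
  have hTm : ‖T Δ‖ ^ 2 ≤ m * ⟪T Δ, Δ⟫ :=
    hTn.trans (mul_le_mul_of_nonneg_right (le_max_right _ _) hq0)
  have hnorm : ‖G + T Δ‖ ^ 2 ≤ 2 * ‖G‖ ^ 2 + 2 * ‖T Δ‖ ^ 2 := by
    have hexp := norm_add_sq_real G (T Δ)
    nlinarith [real_inner_le_norm G (T Δ), sq_nonneg (‖G‖ - ‖T Δ‖)]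
  rw [hdiff]
  have hsum : ⟪G + T Δ, Δ⟫ = ⟪G, Δ⟫ + ⟪T Δ, Δ⟫ := inner_add_left _ _ _
  rw [hsum]
  rw [ge_iff_le, one_div, inv_mul_le_iff₀ (by positivity)]
  nlinarith [hnorm, hGm, hTm]
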